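/- Let k ≥ 1 be an integer, let p be a prime, and let ℓ be a natural number. Then the integer ∑_{j=0}^{k} (−1)^{j·p} · (kp choose jp) · (jp)^{ℓ} is divisible by p^k, where by convention 0^0 = 1. -/

import Mathlib

open Polynomial Finset

private lemma coeff_one_sub_pow' (n i : ℕ) :
    ((1 - X : Polynomial ℤ) ^ n).coeff i = (-1) ^ i * (n.choose i : ℤ) := by
  have h : (1 - X : Polynomial ℤ) = C (-1) * (X + C (-1)) := by
    simp only [map_neg, map_one]
    ring
  rw [h, mul_pow, ← C_pow, coeff_C_mul, coeff_X_add_C_pow]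
  rcases le_or_gt i n with hin | hin
  · obtain ⟨d, rfl⟩ : ∃ d, n = d + i := ⟨n - i, (Nat.sub_add_cancel hin).symm⟩
    rw [Nat.add_sub_cancel]
    have h2 : (-1 : ℤ) ^ (d + d) = 1 := Even.neg_one_pow ⟨d, rfl⟩
    calc (-1 : ℤ) ^ (d + i) * ((-1) ^ d * ((d + i).choose i : ℤ))
        = (-1) ^ (d + d) * ((-1) ^ i * ((d + i).choose i : ℤ)) := by
          rw [pow_add, pow_add]; ring
      _ = (-1) ^ i * ((d + i).choose i : ℤ) := by rw [h2, one_mul]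
  · simp [Nat.choose_eq_zero_of_lt hin]

private lemma key_h (p : ℕ) (hp : p.Prime) :
    ∃ h : Polynomial ℤ, (1 - X) ^ p = 1 - X ^ p + C (p : ℤ) * h ∧ h.natDegree ≤ p := by
  have hdvd : C (p : ℤ) ∣ ((1 - X : Polynomial ℤ) ^ p - (1 - X ^ p)) := by
    rw [C_dvd_iff_dvd_coeff]
    intro i
    rw [coeff_sub, coeff_sub, coeff_one_sub_pow', coeff_one, coeff_X_pow]
    rcases eq_or_ne i 0 with rfl | hi0
    · have h0 : ¬ (0 = p) := fun h => hp.ne_zero h.symm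
      simp [h0]
    rcases lt_trichotomy i p with hip | rfl | hip
    · have : (p : ℤ) ∣ (p.choose i : ℤ) := Int.natCast_dvd_natCast.mpr
        (hp.dvd_choose_self hi0 hip)
      simp only [if_neg hi0, if_neg hip.ne]
      obtain ⟨c, hc⟩ := this
      exact ⟨(-1) ^ i * c, by rw [hc]; ring⟩
    · simp only [Nat.choose_self, if_neg hi0, if_pos rfl, Nat.cast_one, mul_one]
      rcases hp.eq_two_or_odd' with rfl | hodd
      · norm_num
      · rw [hodd.neg_one_pow]; simp
    · simp [Nat.choose_eq_zero_of_lt hip, hi0, hip.ne']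
  obtain ⟨h, hh⟩ := hdvd
  refine ⟨h, by linear_combination hh, ?_⟩
  have hpne : (p : ℤ) ≠ 0 := Int.natCast_ne_zero.mpr hp.ne_zero
  have h1 : (C (p : ℤ) * h).natDegree = h.natDegree := natDegree_C_mul hpne
  have h2 : ((1 - X : Polynomial ℤ) ^ p - (1 - X ^ p)).natDegree ≤ p := by
    apply (natDegree_sub_le _ _).trans
    simp only [max_le_iff]
    constructor
    · exact (natDegree_pow_le).trans (by
        have : (1 - X : Polynomial ℤ).natDegree ≤ 1 := by
          apply (natDegree_sub_le _ _).trans; simp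
        nlinarith)
    · apply (natDegree_sub_le _ _).trans
      simp [natDegree_X_pow]
  rw [hh, h1] at h2
  exact h2

private lemma lemA (p k : ℕ) (hp : 0 < p) :
    ∀ n (u : Polynomial ℤ), u.natDegree + n * p ≤ k * p →
    ∀ ℓ, (p : ℤ) ^ (n - ℓ) ∣
      ∑ j ∈ range (k + 1), ((1 - X ^ p) ^ n * u).coeff (j * p) * (j : ℤ) ^ ℓ
  | 0, u, hdeg, ℓ => by simp
  | n + 1, u, hdeg, ℓ => by
    set u' : Polynomial ℤ := (1 - X ^ p) ^ n * u with hu'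
    have hdeg' : u.natDegree + n * p ≤ k * p := by
      have : n * p ≤ (n + 1) * p := Nat.mul_le_mul_right _ (Nat.le_succ n)
      omega
    have hu'deg : u'.natDegree < k * p := by
      have h1 : u'.natDegree ≤ n * p + u.natDegree :=
        (natDegree_mul_le).trans (by
          gcongr
          exact (natDegree_pow_le).trans (by
            have : (1 - X ^ p : Polynomial ℤ).natDegree ≤ p := by
              apply (natDegree_sub_le _ _).trans; simp [natDegree_X_pow]
            nlinarith))
      have h2 : (n + 1) * p = n * p + p := by ring
      omega
    have hsplit : (1 - X ^ p) ^ (n + 1) * u = u' - u' * X ^ p := by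
      rw [hu', pow_succ]; ring
    have hcoeff : ∀ j, ((1 - X ^ p) ^ (n + 1) * u).coeff (j * p)
        = u'.coeff (j * p) - (if p ≤ j * p then u'.coeff (j * p - p) else 0) := by
      intro j
      rw [hsplit, coeff_sub, coeff_mul_X_pow']
    have hA : ∑ j ∈ range (k + 1),
        (if p ≤ j * p then u'.coeff (j * p - p) else 0) * (j : ℤ) ^ ℓ
        = ∑ j ∈ range (k + 1), u'.coeff (j * p) * ((j : ℤ) + 1) ^ ℓ := by
      rw [Finset.sum_range_succ' (fun j => (if p ≤ j * p then u'.coeff (j * p - p) else 0) * (j : ℤ) ^ ℓ)]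
      rw [Finset.sum_range_succ (fun j => u'.coeff (j * p) * ((j : ℤ) + 1) ^ ℓ)]
      have hlast : u'.coeff (k * p) = 0 := coeff_eq_zero_of_natDegree_lt hu'deg
      rw [hlast]
      simp only [Nat.zero_mul, if_neg (by omega : ¬ p ≤ 0), zero_mul, add_zero, zero_mul, mul_zero]
      apply Finset.sum_congr rfl
      intro i _
      have hcond : p ≤ (i + 1) * p := by nlinarith
      rw [if_pos hcond]
      have : (i + 1) * p - p = i * p := by ring_nf; omega
      rw [this]
      push_cast
      ring
    have hmain : ∑ j ∈ range (k + 1), ((1 - X ^ p) ^ (n + 1) * u).coeff (j * p) * (j : ℤ) ^ ℓ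
        = - ∑ i ∈ range ℓ, (ℓ.choose i : ℤ) * ∑ j ∈ range (k + 1), u'.coeff (j * p) * (j : ℤ) ^ i := by
      calc ∑ j ∈ range (k + 1), ((1 - X ^ p) ^ (n + 1) * u).coeff (j * p) * (j : ℤ) ^ ℓ
          = ∑ j ∈ range (k + 1), (u'.coeff (j * p) * (j : ℤ) ^ ℓ
              - (if p ≤ j * p then u'.coeff (j * p - p) else 0) * (j : ℤ) ^ ℓ) := by
            apply Finset.sum_congr rfl; intro j _; rw [hcoeff]; ring
        _ = ∑ j ∈ range (k + 1), u'.coeff (j * p) * (j : ℤ) ^ ℓ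
              - ∑ j ∈ range (k + 1), (if p ≤ j * p then u'.coeff (j * p - p) else 0) * (j : ℤ) ^ ℓ := by
            rw [Finset.sum_sub_distrib]
        _ = ∑ j ∈ range (k + 1), u'.coeff (j * p) * ((j : ℤ) ^ ℓ - ((j : ℤ) + 1) ^ ℓ) := by
            rw [hA, ← Finset.sum_sub_distrib]
            apply Finset.sum_congr rfl; intro j _; ring
        _ = ∑ j ∈ range (k + 1), u'.coeff (j * p) * (- ∑ i ∈ range ℓ, (j : ℤ) ^ i * (ℓ.choose i : ℤ)) := by
            apply Finset.sum_congr rfl; intro j _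
            congr 1
            have hb : ((j : ℤ) + 1) ^ ℓ = ∑ i ∈ range (ℓ + 1), (j : ℤ) ^ i * 1 ^ (ℓ - i) * (ℓ.choose i : ℤ) :=
              add_pow (j : ℤ) 1 ℓ
            rw [Finset.sum_range_succ] at hb
            simp only [one_pow, mul_one, Nat.choose_self, Nat.cast_one] at hb
            rw [hb]
            ring_nf
        _ = - ∑ i ∈ range ℓ, (ℓ.choose i : ℤ) * ∑ j ∈ range (k + 1), u'.coeff (j * p) * (j : ℤ) ^ i := by
            simp only [mul_neg, Finset.mul_sum, ← Finset.sum_neg_distrib]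
            rw [Finset.sum_comm]
            exact Finset.sum_congr rfl fun i _ =>
              Finset.sum_congr rfl fun j _ => by ring
    rw [hmain]
    apply dvd_neg.mpr
    apply Finset.dvd_sum
    intro i hi
    have hi' : i < ℓ := Finset.mem_range.mp hi
    have hIH := lemA p k hp n u hdeg' i
    have hle : (n + 1) - ℓ ≤ n - i := by omega
    exact Dvd.dvd.mul_left ((pow_dvd_pow _ hle).trans hIH) _

theorem stmt11 (k : ℕ) (hk : 1 ≤ k) (p : ℕ) (hp : p.Prime) (ℓ : ℕ) :
    ((p : ℤ) ^ k) ∣ ∑ j ∈ Finset.range (k + 1),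
      (-1 : ℤ) ^ (j * p) * (Nat.choose (k * p) (j * p) : ℤ) * ((j : ℤ) * p) ^ ℓ := by
  obtain ⟨h, hh, hdegh⟩ := key_h p hp
  have hppos : 0 < p := hp.pos
  have hP : ((1 - X : Polynomial ℤ)) ^ (k * p)
      = ∑ m ∈ range (k + 1),
          C ((p : ℤ) ^ m * (k.choose m : ℤ)) * ((1 - X ^ p) ^ (k - m) * h ^ m) := by
    rw [mul_comm k p, pow_mul, hh]
    rw [show (1 - X ^ p + C (p : ℤ) * h : Polynomial ℤ) = C (p : ℤ) * h + (1 - X ^ p) by ring]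
    rw [add_pow]
    apply Finset.sum_congr rfl
    intro m _
    simp only [mul_pow, ← C_pow, ← C_eq_natCast, C_mul]
    ring
  have hgoal : ∑ j ∈ Finset.range (k + 1),
        (-1 : ℤ) ^ (j * p) * (Nat.choose (k * p) (j * p) : ℤ) * ((j : ℤ) * p) ^ ℓ
      = (∑ j ∈ range (k + 1), ((1 - X : Polynomial ℤ) ^ (k * p)).coeff (j * p) * (j : ℤ) ^ ℓ)
          * (p : ℤ) ^ ℓ := by
    rw [Finset.sum_mul]
    apply Finset.sum_congr rfl
    intro j _
    rw [coeff_one_sub_pow']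
    ring
  rw [hgoal]
  have hdvdT : (p : ℤ) ^ (k - ℓ) ∣
      ∑ j ∈ range (k + 1), ((1 - X : Polynomial ℤ) ^ (k * p)).coeff (j * p) * (j : ℤ) ^ ℓ := by
    have hT : ∑ j ∈ range (k + 1), ((1 - X : Polynomial ℤ) ^ (k * p)).coeff (j * p) * (j : ℤ) ^ ℓ
        = ∑ m ∈ range (k + 1), (p : ℤ) ^ m * (k.choose m : ℤ) *
            ∑ j ∈ range (k + 1), ((1 - X ^ p) ^ (k - m) * h ^ m).coeff (j * p) * (j : ℤ) ^ ℓ := by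
      simp only [hP, finset_sum_coeff, coeff_C_mul, Finset.sum_mul]
      rw [Finset.sum_comm]
      exact Finset.sum_congr rfl fun m _ => by
        rw [Finset.mul_sum]
        exact Finset.sum_congr rfl fun j _ => by ring
    rw [hT]
    apply Finset.dvd_sum
    intro m hm
    have hm' : m ≤ k := Nat.lt_succ_iff.mp (Finset.mem_range.mp hm)
    have hdeg : (h ^ m).natDegree + (k - m) * p ≤ k * p := by
      have h1 : (h ^ m).natDegree ≤ m * p :=
        natDegree_pow_le.trans (Nat.mul_le_mul_left m hdegh)
      have h2 : m * p + (k - m) * p = k * p := by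
        rw [← Nat.add_mul, Nat.add_sub_cancel' hm']
      omega
    obtain ⟨c, hc⟩ := lemA p k hppos (k - m) (h ^ m) hdeg ℓ
    have hpow : (p : ℤ) ^ (k - ℓ) ∣ (p : ℤ) ^ m * (p : ℤ) ^ ((k - m) - ℓ) := by
      rw [← pow_add]; exact pow_dvd_pow _ (by omega)
    exact hpow.trans ⟨(k.choose m : ℤ) * c, by rw [hc]; ring⟩
  obtain ⟨c, hc⟩ := hdvdT
  rw [hc]
  have : (p : ℤ) ^ k ∣ (p : ℤ) ^ (k - ℓ) * (p : ℤ) ^ ℓ := by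
    rw [← pow_add]; exact pow_dvd_pow _ (by omega)
  exact this.trans ⟨c, by ring⟩
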